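/- Let F denote the 3×3 real matrix F = [[0, 1, 0], [-1, 0, √10], [0, -√10, -6]]. Then exp(t·F) tends to the zero matrix as t → +∞; consequently, for every initial vector μ₀ ∈ ℝ³ the mean μ_t = exp(t·F)·μ₀ of the transition kernel of the third-order Langevin dynamics tends to 0 as t → +∞. -/

import Mathlib

open Matrix Filter

/-- For the drift matrix `F = [[0, 1, 0], [-1, 0, √10], [0, -√10, -6]]` of the
third-order Langevin dynamics with `ξ = 6`, `γ = √10`, the matrix exponential
`exp(tF)` tends to the zero matrix as `t → +∞`; consequently, for every initial
vector `μ₀ ∈ ℝ³` the mean `μ_t = exp(tF)·μ₀` of the transition kernel tends to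
`0` as `t → +∞`. -/
theorem exp_smul_hold_drift_tendsto_zero :
    let F : Matrix (Fin 3) (Fin 3) ℝ :=
      !![0, 1, 0; -1, 0, Real.sqrt 10; 0, -Real.sqrt 10, -6]
    Tendsto (fun t : ℝ => NormedSpace.exp (t • F)) atTop
        (nhds (0 : Matrix (Fin 3) (Fin 3) ℝ))
    ∧ ∀ μ₀ : Fin 3 → ℝ,
        Tendsto (fun t : ℝ => (NormedSpace.exp (t • F)).mulVec μ₀) atTop
          (nhds (0 : Fin 3 → ℝ)) := by
  intro F
  set s : ℝ := Real.sqrt 10 with hs_def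
  have hs2 : s * s = 10 := Real.mul_self_sqrt (by norm_num)
  have hs0 : s ≠ 0 := by
    intro h
    rw [h, mul_zero] at hs2
    norm_num at hs2
  set P : Matrix (Fin 3) (Fin 3) ℝ := !![5, 2, 1; -5, -4, -3; s, s, s] with hP_def
  set d : Fin 3 → ℝ := ![-1, -2, -3] with hd_def
  set D : Matrix (Fin 3) (Fin 3) ℝ := Matrix.diagonal d with hD_def
  -- P is invertible
  have hdet : P.det = -2 * s := by
    rw [hP_def, Matrix.det_fin_three]
    simp
    ring
  have hUdet : IsUnit P.det := by
    rw [hdet]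
    exact (isUnit_iff_ne_zero).mpr (by simpa using hs0)
  have hU : IsUnit P := (Matrix.isUnit_iff_isUnit_det P).mpr hUdet
  have hPPinv : P * P⁻¹ = 1 := Matrix.mul_nonsing_inv P hUdet
  -- eigen decomposition
  have hD' : D = !![-1, 0, 0; 0, -2, 0; 0, 0, -3] := by
    rw [hD_def, hd_def]
    ext i j
    fin_cases i <;> fin_cases j <;>
      simp [Matrix.diagonal, Matrix.vecHead, Matrix.vecTail]
  have hFP : F * P = P * D := by
    rw [hD', hP_def]
    show (!![0, 1, 0; -1, 0, s; 0, -s, -6] : Matrix (Fin 3) (Fin 3) ℝ) * _ = _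
    ext i j
    fin_cases i <;> fin_cases j <;>
      simp [Matrix.mul_apply, Fin.sum_univ_three, Matrix.vecHead, Matrix.vecTail] <;>
      nlinarith [hs2]
  have hF : F = P * D * P⁻¹ := by
    calc F = F * (P * P⁻¹) := by rw [hPPinv, mul_one]
    _ = (F * P) * P⁻¹ := by rw [mul_assoc]
    _ = P * D * P⁻¹ := by rw [hFP]
  have hexp : ∀ t : ℝ, NormedSpace.exp (t • F)
      = P * Matrix.diagonal (fun i => Real.exp (t * d i)) * P⁻¹ := by
    intro t
    have h1 : t • F = P * (t • D) * P⁻¹ := by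
      rw [hF]
      simp only [Matrix.mul_smul, Matrix.smul_mul]
    rw [h1, Matrix.exp_conj P (t • D) hU]
    congr 1
    congr 1
    have h2 : t • D = Matrix.diagonal (fun i => t * d i) := by
      rw [hD_def, ← Matrix.diagonal_smul]
      congr 1
    rw [h2, Matrix.exp_diagonal, Pi.exp_def]
    simp [← Real.exp_eq_exp_ℝ]
  -- limit of diagonal entries
  have hv : Tendsto (fun t : ℝ => (fun i => Real.exp (t * d i) : Fin 3 → ℝ))
      atTop (nhds 0) := by
    rw [tendsto_pi_nhds]
    intro i
    have hneg : d i < 0 := by fin_cases i <;> norm_num [hd_def]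
    have hmul : Tendsto (fun t : ℝ => t * d i) atTop atBot :=
      Tendsto.atTop_mul_const_of_neg hneg tendsto_id
    simpa [Function.comp_def] using Real.tendsto_exp_atBot.comp hmul
  have hdiag : Tendsto (fun t : ℝ => Matrix.diagonal (fun i => Real.exp (t * d i)))
      atTop (nhds (0 : Matrix (Fin 3) (Fin 3) ℝ)) := by
    have hc : Continuous fun v : Fin 3 → ℝ => Matrix.diagonal v :=
      Continuous.matrix_diagonal continuous_id
    have := (hc.tendsto 0).comp hv
    have h0 : Matrix.diagonal (0 : Fin 3 → ℝ) = 0 := by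
      ext i j; simp [Matrix.diagonal]
    rw [h0] at this
    simpa [Function.comp_def] using this
  have hmain : Tendsto (fun t : ℝ => NormedSpace.exp (t • F)) atTop
      (nhds (0 : Matrix (Fin 3) (Fin 3) ℝ)) := by
    have h := (tendsto_const_nhds (x := P)).mul hdiag |>.mul
      (tendsto_const_nhds (x := P⁻¹))
    simp only [mul_zero, zero_mul] at h
    refine Tendsto.congr (fun t => (hexp t).symm) h
  refine ⟨hmain, fun μ₀ => ?_⟩
  have hc : Continuous fun M : Matrix (Fin 3) (Fin 3) ℝ => M.mulVec μ₀ :=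
    Continuous.matrix_mulVec continuous_id continuous_const
  have := (hc.tendsto 0).comp hmain
  simpa [Function.comp_def, Matrix.zero_mulVec] using this
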